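/- Let A be a real k × d matrix, let γ > 0 and t₀ < 1 be real with c := 1 − t₀, let x₀ ∈ ℝ^d and y₁ ∈ ℝ^k, and let p ∈ ℝ^d be the unique vector with (γ⁻¹ • 1 + c • (Aᵀ * A)) ⬝ᵥ p = (Aᵀ * A) ⬝ᵥ x₀ − Aᵀ ⬝ᵥ y₁. Then for every path y on [t₀, 1] (with continuous derivative y' on [t₀,1]) satisfying y(t₀) = x₀, the total cost satisfies ∫_{t₀}^{1} ½‖y'(t)‖² dt + (γ/2)‖A ⬝ᵥ y(1) − y₁‖² ≥ (c/2)‖p‖² + (γ/2)‖A ⬝ᵥ (x₀ − c • p) − y₁‖², and equality holds for the straight-line path y*(t) = x₀ − (t − t₀) • p. Hence the constant control u* = −p is optimal for the finite-γ style-constrained problem of Proposition 1. -/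

import Mathlib

open Matrix

open RealInnerProductSpace in
/-- Adjoint identity: `⟪w, A x⟫ = ⟪Aᵀ w, x⟫` on Euclidean spaces. -/
lemma euclid_inner_mulVec_adjoint {k d : ℕ} (A : Matrix (Fin k) (Fin d) ℝ)
    (w : EuclideanSpace ℝ (Fin k)) (x : EuclideanSpace ℝ (Fin d)) :
    ⟪w, ((EuclideanSpace.equiv (Fin k) ℝ).symm (A.mulVec x))⟫
      = ⟪((EuclideanSpace.equiv (Fin d) ℝ).symm (Aᵀ.mulVec w)), x⟫ := by
  simp [PiLp.inner_apply, RCLike.inner_apply, Matrix.mulVec, dotProduct,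
    Finset.mul_sum, Finset.sum_mul]
  rw [Finset.sum_comm]
  congr 1; ext i; congr 1; ext j; ring

open RealInnerProductSpace in
/-- Finite-γ style-constrained problem of Proposition 1: with `c = 1 − t₀` and `p` the
unique solution of `(γ⁻¹ • 1 + c • AᵀA) ⬝ᵥ p = AᵀA ⬝ᵥ x₀ − Aᵀ ⬝ᵥ y₁`, every path starting
at `x₀` has total cost at least `(c/2)‖p‖² + (γ/2)‖A(x₀ − cp) − y₁‖²`, and equality holds
for the straight-line path `y*(t) = x₀ − (t − t₀) • p`; i.e. the constant control
`u* = −p` is optimal. -/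
theorem finite_gamma_style_optimal_control {k d : ℕ} (A : Matrix (Fin k) (Fin d) ℝ)
    (γ t₀ c : ℝ) (hγ : 0 < γ) (ht₀ : t₀ < 1) (hc : c = 1 - t₀)
    (x₀ : EuclideanSpace ℝ (Fin d)) (y₁ : EuclideanSpace ℝ (Fin k))
    (p : EuclideanSpace ℝ (Fin d))
    (hp : (γ⁻¹ • (1 : Matrix (Fin d) (Fin d) ℝ) + c • (Aᵀ * A)).mulVec p
      = (Aᵀ * A).mulVec x₀ - Aᵀ.mulVec y₁) :
    (∀ y y' : ℝ → EuclideanSpace ℝ (Fin d),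
      (∀ t ∈ Set.Icc t₀ 1, HasDerivAt y (y' t) t) → ContinuousOn y' (Set.Icc t₀ 1) →
      y t₀ = x₀ →
      (∫ t in t₀..1, ((1 : ℝ) / 2) * ‖y' t‖ ^ 2)
          + (γ / 2) * ‖(EuclideanSpace.equiv (Fin k) ℝ).symm (A.mulVec (y 1)) - y₁‖ ^ 2
        ≥ (c / 2) * ‖p‖ ^ 2
          + (γ / 2) * ‖(EuclideanSpace.equiv (Fin k) ℝ).symm (A.mulVec (x₀ - c • p)) - y₁‖ ^ 2) ∧
    (∀ y : ℝ → EuclideanSpace ℝ (Fin d),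
      (∀ t, y t = x₀ - (t - t₀) • p) →
      y t₀ = x₀ ∧
      (∀ t : ℝ, HasDerivAt y (-p) t) ∧
      (∫ _t in t₀..(1 : ℝ), ((1 : ℝ) / 2) * ‖(-p : EuclideanSpace ℝ (Fin d))‖ ^ 2)
          + (γ / 2) * ‖(EuclideanSpace.equiv (Fin k) ℝ).symm (A.mulVec (y 1)) - y₁‖ ^ 2
        = (c / 2) * ‖p‖ ^ 2
          + (γ / 2) * ‖(EuclideanSpace.equiv (Fin k) ℝ).symm (A.mulVec (x₀ - c • p)) - y₁‖ ^ 2) := by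
  have hγ0 : γ ≠ 0 := ne_of_gt hγ
  have ht01 : t₀ ≤ 1 := ht₀.le
  have huIcc : Set.uIcc t₀ (1 : ℝ) = Set.Icc t₀ 1 := Set.uIcc_of_le ht01
  -- the key vector identity coming from the optimality system
  have hkey : γ • ((EuclideanSpace.equiv (Fin d) ℝ).symm
      (Aᵀ.mulVec ((EuclideanSpace.equiv (Fin k) ℝ).symm (A.mulVec (x₀ - c • p)) - y₁))) = p := by
    have h2 : ((EuclideanSpace.equiv (Fin d) ℝ).symm
        (Aᵀ.mulVec ((EuclideanSpace.equiv (Fin k) ℝ).symm (A.mulVec (x₀ - c • p)) - y₁)))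
        = γ⁻¹ • p := by
      ext j
      have h := congrFun hp j
      simp only [Matrix.mulVec, dotProduct, Matrix.add_apply, Matrix.smul_apply,
        Matrix.one_apply, Matrix.mul_apply, Matrix.transpose_apply, Pi.sub_apply, Pi.smul_apply,
        smul_eq_mul, mul_sub, sub_mul, add_mul, mul_add, ite_mul, mul_ite, mul_zero, zero_mul,
        mul_one, one_mul, Finset.sum_sub_distrib, Finset.sum_add_distrib, Finset.sum_ite_eq,
        Finset.mem_univ, if_true, Finset.mul_sum, Finset.sum_mul] at h
      conv at h => lhs; rw [Finset.sum_comm]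
      conv at h => rhs; rw [Finset.sum_comm]
      simp only [PiLp.continuousLinearEquiv_symm_apply, PiLp.toLp_apply,
        PiLp.smul_apply, PiLp.sub_apply, Pi.sub_apply, Pi.smul_apply, smul_eq_mul, Matrix.mulVec, dotProduct,
        Matrix.transpose_apply, mul_sub, sub_mul, Finset.sum_sub_distrib, Finset.mul_sum,
        Finset.sum_mul]
      simp only [mul_comm, mul_left_comm, mul_assoc] at h ⊢
      linarith [h]
    rw [h2, smul_smul, mul_inv_cancel₀ hγ0, one_smul]
  constructor
  · -- lower bound for every admissible path
    intro y y' hderiv hcont hy0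
    set a : EuclideanSpace ℝ (Fin k) :=
      (EuclideanSpace.equiv (Fin k) ℝ).symm (A.mulVec (x₀ - c • p)) - y₁ with ha_def
    set b : EuclideanSpace ℝ (Fin k) :=
      (EuclideanSpace.equiv (Fin k) ℝ).symm (A.mulVec (y 1)) - y₁ with hb_def
    have hcont' : ContinuousOn y' (Set.uIcc t₀ 1) := huIcc ▸ hcont
    have hy'int : IntervalIntegrable y' MeasureTheory.volume t₀ 1 :=
      hcont'.intervalIntegrable
    have hftc : (∫ t in t₀..1, y' t) = y 1 - x₀ := by
      rw [← hy0]
      exact intervalIntegral.integral_eq_sub_of_hasDerivAt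
        (fun t ht => hderiv t (huIcc ▸ ht)) hy'int
    have hinncont : ContinuousOn (fun t => (⟪(-p : EuclideanSpace ℝ (Fin d)), y' t⟫ : ℝ))
        (Set.uIcc t₀ 1) :=
      (innerSL ℝ (-p : EuclideanSpace ℝ (Fin d))).continuous.comp_continuousOn hcont'
    have hinner : (∫ t in t₀..1, (⟪(-p : EuclideanSpace ℝ (Fin d)), y' t⟫ : ℝ))
        = ⟪(-p : EuclideanSpace ℝ (Fin d)), y 1 - x₀⟫ := by
      have h := (innerSL ℝ (-p : EuclideanSpace ℝ (Fin d))).intervalIntegral_comp_comm hy'int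
      rw [hftc] at h
      simpa using h
    have hlow : (∫ t in t₀..1, ((⟪(-p : EuclideanSpace ℝ (Fin d)), y' t⟫ : ℝ)
          - (1 / 2) * ‖p‖ ^ 2))
        ≤ ∫ t in t₀..1, ((1 : ℝ) / 2) * ‖y' t‖ ^ 2 := by
      apply intervalIntegral.integral_mono_on ht01
      · exact (hinncont.sub continuousOn_const).intervalIntegrable
      · exact (continuousOn_const.mul ((hcont'.norm).pow 2)).intervalIntegrable
      · intro t _
        have h0 : (0 : ℝ) ≤ ‖y' t + p‖ ^ 2 := sq_nonneg _
        have hexp : ‖y' t + p‖ ^ 2 = ‖y' t‖ ^ 2 + 2 * ⟪y' t, p⟫ + ‖p‖ ^ 2 :=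
          norm_add_sq_real _ _
        have hneg : (⟪(-p : EuclideanSpace ℝ (Fin d)), y' t⟫ : ℝ) = -⟪y' t, p⟫ := by
          rw [inner_neg_left, real_inner_comm]
        rw [hneg]
        nlinarith [h0, hexp]
    have hIeval : (∫ t in t₀..1, ((⟪(-p : EuclideanSpace ℝ (Fin d)), y' t⟫ : ℝ)
          - (1 / 2) * ‖p‖ ^ 2))
        = ⟪(-p : EuclideanSpace ℝ (Fin d)), y 1 - x₀⟫ - (1 - t₀) * ((1 / 2) * ‖p‖ ^ 2) := by
      rw [intervalIntegral.integral_sub hinncont.intervalIntegrable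
        intervalIntegrable_const, hinner, intervalIntegral.integral_const, smul_eq_mul]
    -- terminal-cost convexity
    have hbsum : b = a + (b - a) := by abel
    have hb2 : ‖b‖ ^ 2 = ‖a‖ ^ 2 + 2 * ⟪a, b - a⟫ + ‖b - a‖ ^ 2 := by
      conv_lhs => rw [hbsum]
      exact norm_add_sq_real _ _
    have hba : b - a = (EuclideanSpace.equiv (Fin k) ℝ).symm
        (A.mulVec (y 1 - (x₀ - c • p))) := by
      rw [ha_def, hb_def]
      ext i
      simp only [PiLp.continuousLinearEquiv_symm_apply, PiLp.toLp_apply,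
        PiLp.sub_apply, PiLp.smul_apply, smul_eq_mul, Matrix.mulVec, dotProduct,
        Pi.sub_apply, Pi.smul_apply, mul_sub, Finset.sum_sub_distrib]
      ring
    have hab : γ * (⟪a, b - a⟫ : ℝ) = ⟪p, y 1 - (x₀ - c • p)⟫ := by
      rw [hba, euclid_inner_mulVec_adjoint, ← real_inner_smul_left, ha_def, WithLp.ofLp_sub, hkey]
      rfl
    have hxs : (⟪p, y 1 - (x₀ - c • p)⟫ : ℝ) - ⟪p, y 1 - x₀⟫ = c * ‖p‖ ^ 2 := by
      rw [← inner_sub_right]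
      have h3 : (y 1 - (x₀ - c • p)) - (y 1 - x₀) = c • p := by
        abel
      rw [h3, real_inner_smul_right, real_inner_self_eq_norm_sq]
    have hnegin : (⟪(-p : EuclideanSpace ℝ (Fin d)), y 1 - x₀⟫ : ℝ) = -⟪p, y 1 - x₀⟫ :=
      inner_neg_left _ _
    have hb2' : (γ / 2) * ‖b‖ ^ 2
        = (γ / 2) * ‖a‖ ^ 2 + γ * ⟪a, b - a⟫ + (γ / 2) * ‖b - a‖ ^ 2 := by
      rw [hb2]; ring
    have hba0 : 0 ≤ (γ / 2) * ‖b - a‖ ^ 2 :=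
      mul_nonneg (by linarith) (sq_nonneg _)
    rw [ge_iff_le]
    rw [hIeval, hnegin, ← hc] at hlow
    linarith [hlow, hb2', hab, hxs, hba0]
  · -- the straight-line path attains the bound
    intro y hy
    have hyfun : y = fun t => x₀ - (t - t₀) • p := funext hy
    subst hyfun
    refine ⟨by simp, fun t => ?_, ?_⟩
    · have h := (((hasDerivAt_id t).sub_const t₀).smul_const
        (p : EuclideanSpace ℝ (Fin d))).const_sub x₀
      simpa using h
    · have hy1 : x₀ - ((1 : ℝ) - t₀) • p = x₀ - c • p := by rw [hc]
      simp only [hy1]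
      rw [intervalIntegral.integral_const, smul_eq_mul, norm_neg, hc]
      simp only [WithLp.ofLp_sub, WithLp.ofLp_smul]
      ring
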